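/- For $T \ge 2$, the supremum of $\|f'\|_\infty$ over all $f \in \mathcal{L}_2(T)$ equals $2$. -/

import Mathlib

open Set

/-- Membership in Landau's class `𝓛₂(T)`. -/
def InL2 (T : ℝ) (f f' : ℝ → ℝ) : Prop :=
  (∀ t ∈ Icc 0 T, HasDerivWithinAt f (f' t) (Icc 0 T) t) ∧
  (∀ t ∈ Icc 0 T, |f t| ≤ 1) ∧
  LipschitzOnWith 1 f' (Icc 0 T)

lemma taylor_aux {T : ℝ} {f f' : ℝ → ℝ}
    (hderiv : ∀ t ∈ Icc 0 T, HasDerivWithinAt f (f' t) (Icc (0:ℝ) T) t)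
    (hlip : LipschitzOnWith 1 f' (Icc 0 T))
    {u v : ℝ} (hu : u ∈ Icc 0 T) (hv : v ∈ Icc 0 T) :
    f v - f u - f' u * (v - u) ≤ (v - u)^2 / 2 := by
  set g : ℝ → ℝ := fun t => f t - f' u * t - (t - u)^2 / 2 with hg
  have hfc : ContinuousOn f (Icc 0 T) := fun t ht => (hderiv t ht).continuousWithinAt
  have key : ∀ a b : ℝ, a ∈ Icc 0 T → b ∈ Icc 0 T → a ≤ b →
      ∀ t ∈ Ioo a b, HasDerivAt g (f' t - f' u - (t - u)) t := by
    intro a b ha hb hab t ht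
    have htT : t ∈ Ioo 0 T := ⟨lt_of_le_of_lt ha.1 ht.1, lt_of_lt_of_le ht.2 hb.2⟩
    have h1 : HasDerivAt f (f' t) t :=
      (hderiv t (Ioo_subset_Icc_self htT)).hasDerivAt (Icc_mem_nhds htT.1 htT.2)
    have h2 : HasDerivAt (fun t : ℝ => f' u * t) (f' u) t := by
      simpa using (hasDerivAt_id t).const_mul (f' u)
    have h3 : HasDerivAt (fun t : ℝ => (t - u)^2 / 2) (t - u) t := by
      have := ((hasDerivAt_id t).sub_const u).pow 2
      simpa using this.div_const 2
    exact (h1.sub h2).sub h3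
  have hlip' : ∀ s t, s ∈ Icc 0 T → t ∈ Icc 0 T → |f' s - f' t| ≤ |s - t| := by
    intro s t hs ht
    have := hlip.dist_le_mul s hs t ht
    simpa [Real.dist_eq] using this
  rcases le_total u v with huv | huv
  · have hanti : AntitoneOn g (Icc u v) := by
      apply antitoneOn_of_deriv_nonpos (convex_Icc u v)
      · apply ContinuousOn.sub
        apply ContinuousOn.sub
        · exact hfc.mono (Icc_subset_Icc hu.1 hv.2)
        · fun_prop
        · fun_prop
      · intro t ht
        rw [interior_Icc] at ht
        exact ((key u v hu hv huv t ht).differentiableAt).differentiableWithinAt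
      · intro t ht
        rw [interior_Icc] at ht
        rw [(key u v hu hv huv t ht).deriv]
        have h := hlip' t u (Icc_subset_Icc hu.1 hv.2 (Ioo_subset_Icc_self ht)) hu
        have h2 := (le_abs_self (f' t - f' u)).trans h
        rw [abs_of_nonneg (by linarith [ht.1] : (0:ℝ) ≤ t - u)] at h2
        linarith
    have := hanti (left_mem_Icc.2 huv) (right_mem_Icc.2 huv) huv
    simp only [hg] at this
    nlinarith [this]
  · have hmono : MonotoneOn g (Icc v u) := by
      apply monotoneOn_of_deriv_nonneg (convex_Icc v u)
      · apply ContinuousOn.sub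
        apply ContinuousOn.sub
        · exact hfc.mono (Icc_subset_Icc hv.1 hu.2)
        · fun_prop
        · fun_prop
      · intro t ht
        rw [interior_Icc] at ht
        exact ((key v u hv hu huv t ht).differentiableAt).differentiableWithinAt
      · intro t ht
        rw [interior_Icc] at ht
        rw [(key v u hv hu huv t ht).deriv]
        have h := hlip' t u (Icc_subset_Icc hv.1 hu.2 (Ioo_subset_Icc_self ht)) hu
        have h2 := (neg_abs_le (f' t - f' u)).trans (le_abs_self _)
        have h3 := (neg_le_neg h).trans (neg_abs_le (f' t - f' u))
        rw [abs_of_nonpos (by linarith [ht.2] : t - u ≤ 0)] at h3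
        linarith
    have := hmono (left_mem_Icc.2 huv) (right_mem_Icc.2 huv) huv
    simp only [hg] at this
    nlinarith [this]
noncomputable def Fex : ℝ → ℝ := fun t => if t ≤ 2 then -t^2/2 + 2*t - 1 else 1
noncomputable def Fex' : ℝ → ℝ := fun t => max (2 - t) 0

lemma fex_deriv (t : ℝ) : HasDerivAt Fex (Fex' t) t := by
  rcases lt_trichotomy t 2 with h | h | h
  · have hpoly : HasDerivAt (fun s : ℝ => -s^2/2 + 2*s - 1) (2 - t) t := by
      have h1 : HasDerivAt (fun s : ℝ => s^2) (2*t) t := by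
        simpa using hasDerivAt_pow 2 t
      have := ((h1.neg.div_const 2).add ((hasDerivAt_id t).const_mul 2)).sub_const 1
      exact this.congr_deriv (by ring)
    have heq : Fex =ᶠ[nhds t] (fun s : ℝ => -s^2/2 + 2*s - 1) := by
      filter_upwards [Iio_mem_nhds h] with s hs
      simp [Fex, le_of_lt (mem_Iio.1 hs)]
    have : Fex' t = 2 - t := by simp [Fex', max_eq_left]; linarith
    rw [this]
    exact hpoly.congr_of_eventuallyEq heq
  · subst h
    have h1 : HasDerivWithinAt Fex 0 (Iic 2) 2 := by
      have hpoly : HasDerivAt (fun s : ℝ => -s^2/2 + 2*s - 1) 0 2 := by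
        have h1 : HasDerivAt (fun s : ℝ => s^2) (2*2) 2 := by
          simpa using hasDerivAt_pow 2 (2:ℝ)
        have := ((h1.neg.div_const 2).add ((hasDerivAt_id (2:ℝ)).const_mul 2)).sub_const 1
        exact this.congr_deriv (by norm_num)
      refine (hpoly.hasDerivWithinAt).congr ?_ ?_ <;> simp [Fex]
      intro s hs; simp [Fex, hs]
    have h2 : HasDerivWithinAt Fex 0 (Ici 2) 2 := by
      refine (hasDerivWithinAt_const 2 _ 1).congr ?_ ?_
      · intro s hs
        rcases eq_or_lt_of_le (mem_Ici.1 hs) with h | h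
        · simp [Fex, ← h]; norm_num
        · simp [Fex, not_le.2 h]
      · simp [Fex]; norm_num
    have := h1.union h2
    rw [Iic_union_Ici, hasDerivWithinAt_univ] at this
    simpa [Fex'] using this
  · have heq : Fex =ᶠ[nhds t] (fun _ : ℝ => (1:ℝ)) := by
      filter_upwards [Ioi_mem_nhds h] with s hs
      simp [Fex, not_le.2 (mem_Ioi.1 hs)]
    have hv : Fex' t = 0 := by simp [Fex', max_eq_right]; linarith
    rw [hv]
    exact (hasDerivAt_const t 1).congr_of_eventuallyEq heq

lemma fex_mem (T : ℝ) (_hT : 2 ≤ T) : InL2 T Fex Fex' := by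
  refine ⟨fun t ht => (fex_deriv t).hasDerivWithinAt, ?_, ?_⟩
  · intro t ht
    rw [abs_le]
    by_cases h : t ≤ 2
    · simp only [Fex, if_pos h]
      constructor <;> nlinarith [ht.1]
    · simp [Fex, h]
  · rw [lipschitzOnWith_iff_dist_le_mul]
    intro x _ y _
    simp only [Real.dist_eq, Fex', NNReal.coe_one, one_mul]
    calc |max (2-x) 0 - max (2-y) 0| ≤ |(2-x) - (2-y)| := abs_max_sub_max_le_abs _ _ _
    _ = |x - y| := by rw [abs_sub_comm]; ring_nf

/-- For `T ≥ 2`, `sup_{f ∈ 𝓛₂(T)} ‖f'‖_∞ = 2` (and the supremum is attained). -/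
theorem landau_sup_large_T (T : ℝ) (hT : 2 ≤ T) :
    IsGreatest {y : ℝ | ∃ f f' : ℝ → ℝ, InL2 T f f' ∧
        ∃ x ∈ Icc 0 T, y = |f' x|} 2 := by
  constructor
  · refine ⟨Fex, Fex', fex_mem T hT, 0, ⟨le_refl 0, by linarith⟩, ?_⟩
    norm_num [Fex']
  · rintro y ⟨f, f', ⟨hderiv, hbound, hlip⟩, x, hx, rfl⟩
    set a := min x (T - 2) with ha
    have ha0 : 0 ≤ a := le_min hx.1 (by linarith)
    have haT : a + 2 ≤ T := by have := min_le_right x (T-2); linarith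
    have hax : a ≤ x := min_le_left _ _
    have hxb : x ≤ a + 2 := by
      rcases le_total x (T-2) with h | h
      · rw [ha, min_eq_left h]; linarith
      · rw [ha, min_eq_right h]; linarith [hx.2]
    have hamem : a ∈ Icc (0:ℝ) T := ⟨ha0, by linarith⟩
    have hbmem : a + 2 ∈ Icc (0:ℝ) T := ⟨by linarith, haT⟩
    have t1 := taylor_aux hderiv hlip hx hbmem
    have t2 := taylor_aux hderiv hlip hx hamem
    have hdneg : ∀ t ∈ Icc 0 T, HasDerivWithinAt (fun s => -f s) (-f' t) (Icc (0:ℝ) T) t :=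
      fun t ht => (hderiv t ht).neg
    have hlneg : LipschitzOnWith 1 (fun s => -f' s) (Icc (0:ℝ) T) := by
      have := hlip.neg
      simpa [Pi.neg_def] using this
    have t3 := taylor_aux hdneg hlneg hx hbmem
    have t4 := taylor_aux hdneg hlneg hx hamem
    have hfa := abs_le.1 (hbound a hamem)
    have hfb := abs_le.1 (hbound (a+2) hbmem)
    rw [abs_le]
    constructor
    · nlinarith [t1, t4, mul_nonneg (sub_nonneg.2 hax) (by linarith : (0:ℝ) ≤ a + 2 - x)]
    · nlinarith [t2, t3, mul_nonneg (sub_nonneg.2 hax) (by linarith : (0:ℝ) ≤ a + 2 - x)]
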